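/- arXiv:math/0606161 — 2 statements merged into one kernel-verified Lean document; each statement's English description precedes it below -/
import Mathlib

section
/- For every integer n, det(Aⁿ − M) = 2, where A = [[2,1],[1,1]] and M = [[0,1],[-1,0]]. -/
open Matrix


/-- The matrix A = [[2,1],[1,1]] as an element of SL(2,ℤ). -/
def A : Matrix.SpecialLinearGroup (Fin 2) ℤ :=
  ⟨!![2, 1; 1, 1], by simp [Matrix.det_fin_two_of]⟩

/-- The matrix M = [[0,1],[-1,0]]. -/
def M : Matrix (Fin 2) (Fin 2) ℤ := !![0, 1; -1, 0]

lemma A_pow_symm (n : ℤ) :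
    (((A ^ n : Matrix.SpecialLinearGroup (Fin 2) ℤ) : Matrix (Fin 2) (Fin 2) ℤ))ᵀ
      = ((A ^ n : Matrix.SpecialLinearGroup (Fin 2) ℤ) : Matrix (Fin 2) (Fin 2) ℤ) := by
  have hA : ((A : Matrix (Fin 2) (Fin 2) ℤ))ᵀ = (A : Matrix (Fin 2) (Fin 2) ℤ) := by
    show (!![2, 1; 1, 1] : Matrix (Fin 2) (Fin 2) ℤ)ᵀ = _
    decide
  have hAinv : (((A⁻¹ : Matrix.SpecialLinearGroup (Fin 2) ℤ) : Matrix (Fin 2) (Fin 2) ℤ))ᵀ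
      = ((A⁻¹ : Matrix.SpecialLinearGroup (Fin 2) ℤ) : Matrix (Fin 2) (Fin 2) ℤ) := by
    rw [Matrix.SpecialLinearGroup.coe_inv]
    show ((!![2, 1; 1, 1] : Matrix (Fin 2) (Fin 2) ℤ).adjugate)ᵀ = _
    decide
  induction n using Int.induction_on with
  | zero => simp
  | succ k ih =>
    have h1 : A ^ ((k : ℤ) + 1) = A ^ (k : ℤ) * A := by rw [_root_.zpow_add, zpow_one]
    have h2 : A ^ ((k : ℤ) + 1) = A * A ^ (k : ℤ) := by rw [add_comm, _root_.zpow_one_add]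
    rw [h1, Matrix.SpecialLinearGroup.coe_mul, Matrix.transpose_mul, ih, hA,
      ← Matrix.SpecialLinearGroup.coe_mul, ← h2, h1, Matrix.SpecialLinearGroup.coe_mul]
  | pred k ih =>
    have h1 : A ^ (-(k : ℤ) - 1) = A ^ (-(k : ℤ)) * A⁻¹ := by
      rw [_root_.zpow_sub, zpow_one]
    have h2 : A ^ (-(k : ℤ) - 1) = A⁻¹ * A ^ (-(k : ℤ)) := by
      rw [sub_eq_add_neg, add_comm, _root_.zpow_add, _root_.zpow_neg, zpow_one]
    rw [h1, Matrix.SpecialLinearGroup.coe_mul, Matrix.transpose_mul, ih, hAinv,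
      ← Matrix.SpecialLinearGroup.coe_mul, ← h2, h1, Matrix.SpecialLinearGroup.coe_mul]

theorem stmt2 (n : ℤ) :
    (((A ^ n : Matrix.SpecialLinearGroup (Fin 2) ℤ) : Matrix (Fin 2) (Fin 2) ℤ) - M).det = 2 := by
  set B := ((A ^ n : Matrix.SpecialLinearGroup (Fin 2) ℤ) : Matrix (Fin 2) (Fin 2) ℤ) with hB
  have hdet : B.det = 1 := (A ^ n).2
  have hsym : B 1 0 = B 0 1 := by
    have := A_pow_symm n
    rw [← hB] at this
    calc B 1 0 = Bᵀ 0 1 := rfl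
    _ = B 0 1 := by rw [this]
  rw [Matrix.det_fin_two] at hdet ⊢
  have e00 : M 0 0 = 0 := rfl
  have e01 : M 0 1 = 1 := rfl
  have e10 : M 1 0 = -1 := rfl
  have e11 : M 1 1 = 0 := rfl
  simp only [Matrix.sub_apply, e00, e01, e10, e11]
  ring_nf
  linarith [hdet, hsym]
end

section
/- Every element of G with even second component (level) is φ-twisted-conjugate to an element of the form ((m,k),0), and every element with odd level is φ-twisted-conjugate to an element of the form ((m,k),1). -/
/-- The automorphism of ℤ² given by the matrix A = [[2,1],[1,1]]. -/
def α : AddAut (ℤ × ℤ) where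
  toFun p := (2 * p.1 + p.2, p.1 + p.2)
  invFun p := (p.1 - p.2, -p.1 + 2 * p.2)
  left_inv p := by obtain ⟨x, y⟩ := p; simp only [Prod.mk.injEq]; constructor <;> ring
  right_inv p := by obtain ⟨x, y⟩ := p; simp only [Prod.mk.injEq]; constructor <;> ring
  map_add' p q := by simp only [Prod.fst_add, Prod.snd_add, Prod.mk_add_mk, Prod.mk.injEq]; constructor <;> ring

/-- The automorphism of ℤ² given by the matrix M = [[0,1],[-1,0]]. -/
def μ : AddAut (ℤ × ℤ) where
  toFun p := (p.2, -p.1)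
  invFun p := (-p.2, p.1)
  left_inv p := by simp
  right_inv p := by simp
  map_add' p q := by simp only [Prod.fst_add, Prod.snd_add, Prod.mk_add_mk, Prod.mk.injEq]; constructor <;> first | trivial | ring

/-- The automorphism group structure on `AddAut A` as it was in older Mathlib (multiplicative,
with multiplication given by composition). -/
instance AddAutOld.instGroup (A : Type*) [Add A] : Group (AddAut A) where
  mul g h := AddEquiv.trans h g
  one := AddEquiv.refl _
  inv := AddEquiv.symm
  mul_assoc _ _ _ := rfl
  one_mul _ := rfl
  mul_one _ := rfl
  inv_mul_cancel := AddEquiv.self_trans_symm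

@[simp] lemma AddAutOld.mul_apply {A : Type*} [Add A] (e₁ e₂ : AddAut A) (m : A) :
    (e₁ * e₂) m = e₁ (e₂ m) := rfl
@[simp] lemma AddAutOld.one_apply {A : Type*} [Add A] (m : A) : (1 : AddAut A) m = m := rfl
@[simp] lemma AddAutOld.inv_apply {A : Type*} [Add A] (e : AddAut A) (m : A) :
    e⁻¹ m = e.symm m := rfl

/-- The semidirect product G = ℤ² ⋊_α ℤ. -/
@[ext] structure G where
  x : ℤ × ℤ
  n : ℤ

instance : Mul G := ⟨fun g h => ⟨g.x + (α ^ g.n) h.x, g.n + h.n⟩⟩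
instance : One G := ⟨⟨0, 0⟩⟩
instance : Inv G := ⟨fun g => ⟨-((α ^ (-g.n)) g.x), -g.n⟩⟩

lemma G.mul_def (g h : G) : g * h = ⟨g.x + (α ^ g.n) h.x, g.n + h.n⟩ := rfl
lemma G.one_def : (1 : G) = ⟨0, 0⟩ := rfl
lemma G.inv_def (g : G) : g⁻¹ = ⟨-((α ^ (-g.n)) g.x), -g.n⟩ := rfl

instance : Group G where
  mul_assoc a b c := by
    ext : 1
    · show (a.x + (α ^ a.n) b.x) + (α ^ (a.n + b.n)) c.x
        = a.x + (α ^ a.n) (b.x + (α ^ b.n) c.x)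
      rw [zpow_add, AddAutOld.mul_apply, map_add]; abel
    · show a.n + b.n + c.n = a.n + (b.n + c.n); ring
  one_mul a := by
    ext : 1
    · show (0 : ℤ × ℤ) + (α ^ (0:ℤ)) a.x = a.x
      simp
    · show (0 : ℤ) + a.n = a.n; ring
  mul_one a := by
    ext : 1
    · show a.x + (α ^ a.n) 0 = a.x
      simp
    · show a.n + 0 = a.n; ring
  inv_mul_cancel a := by
    ext : 1
    · show -((α ^ (-a.n)) a.x) + (α ^ (-a.n)) a.x = 0
      simp
    · show -a.n + a.n = 0; ring

lemma mu_alpha : μ * α = α⁻¹ * μ := by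
  apply AddEquiv.ext
  intro p
  rw [AddAutOld.mul_apply, AddAutOld.mul_apply]
  show μ (α p) = α.symm (μ p)
  show ((α p).2, -(α p).1) = α.symm (p.2, -p.1)
  show ((p.1 + p.2 : ℤ), -(2 * p.1 + p.2)) = (p.2 - (-p.1), -p.2 + 2 * (-p.1))
  simp only [Prod.mk.injEq]; constructor <;> ring

lemma mu_alpha_conj : μ * α * μ⁻¹ = α⁻¹ := by
  rw [mu_alpha, mul_assoc]
  simp

lemma mu_alpha_zpow (n : ℤ) : μ * α ^ n = α ^ (-n) * μ := by
  have h : MulAut.conj μ (α ^ n) = α ^ (-n) := by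
    rw [map_zpow, MulAut.conj_apply, mu_alpha_conj, inv_zpow, zpow_neg]
  rw [MulAut.conj_apply] at h
  calc μ * α ^ n = (μ * α ^ n * μ⁻¹) * μ := by group
    _ = α ^ (-n) * μ := by rw [h]

/-- The automorphism φ((m,k),n) = ((k,-m),-n). -/
def φ : G ≃* G where
  toFun g := ⟨μ g.x, -g.n⟩
  invFun g := ⟨μ⁻¹ g.x, -g.n⟩
  left_inv g := by
    ext : 1
    · show μ⁻¹ (μ g.x) = g.x
      simp
    · simp
  right_inv g := by
    ext : 1
    · show μ (μ⁻¹ g.x) = g.x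
      simp
    · simp
  map_mul' g h := by
    ext : 1
    · show μ (g.x + (α ^ g.n) h.x) = μ g.x + (α ^ (-g.n)) (μ h.x)
      rw [map_add]
      congr 1
      calc μ ((α ^ g.n) h.x) = (μ * α ^ g.n) h.x := rfl
        _ = (α ^ (-g.n) * μ) h.x := by rw [mu_alpha_zpow]
        _ = (α ^ (-g.n)) (μ h.x) := rfl
    · show -(g.n + h.n) = -g.n + -h.n; ring

/-- φ-twisted conjugacy. -/
def twConj (h h' : G) : Prop := ∃ g : G, h' = g * h * (φ g)⁻¹

theorem stmt5 (g : G) :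
    (Even g.n → ∃ m k : ℤ, twConj g ⟨(m, k), 0⟩) ∧
    (Odd g.n → ∃ m k : ℤ, twConj g ⟨(m, k), 1⟩) := by
  have key : ∀ t : ℤ, ∃ c : G, twConj g c ∧ c.n = t + g.n + t := by
    intro t
    refine ⟨⟨(0, 0), t⟩ * g * (φ ⟨⟨0, 0⟩, t⟩)⁻¹, ⟨⟨⟨0, 0⟩, t⟩, rfl⟩, ?_⟩
    show ((⟨(0, 0), t⟩ : G) * g).n + (φ ⟨⟨0, 0⟩, t⟩)⁻¹.n = t + g.n + t
    show (t + g.n) + -(-t) = t + g.n + t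
    omega
  constructor
  · rintro ⟨s, hs⟩
    obtain ⟨c, hc, hn⟩ := key (-s)
    refine ⟨c.x.1, c.x.2, ?_⟩
    have : c = ⟨(c.x.1, c.x.2), 0⟩ := G.ext rfl (show c.n = 0 by omega)
    rwa [this] at hc
  · rintro ⟨s, hs⟩
    obtain ⟨c, hc, hn⟩ := key (-s)
    refine ⟨c.x.1, c.x.2, ?_⟩
    have : c = ⟨(c.x.1, c.x.2), 1⟩ := G.ext rfl (show c.n = 1 by omega)
    rwa [this] at hc
end
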